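/- For every n ≥ 1 and all X ∈ ℝ, the derivative of T_n satisfies T_n'(X) = (1/2) S_{n−1}(X). -/

import Mathlib

open MeasureTheory

noncomputable section

/-- The `n`-th Laguerre polynomial `L_n(x) = Σ_{k=0}^n (n choose k) (−x)^k / k!`. -/
def laguerreFun (n : ℕ) (x : ℝ) : ℝ :=
  ∑ k ∈ Finset.range (n + 1), (n.choose k : ℝ) * (-x) ^ k / (k.factorial : ℝ)

/-- `T_n(X) = Σ_{k=0}^{n−1} (−1)^k L_k(X) + ((−1)^n/2) L_n(X)`. -/
def Tfun (n : ℕ) (X : ℝ) : ℝ :=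
  (∑ k ∈ Finset.range n, (-1 : ℝ) ^ k * laguerreFun k X) +
    (-1 : ℝ) ^ n / 2 * laguerreFun n X

/-- `V_α(X) = 4 e^{−X/2} Σ_{k=0}^{d−1} C(d−1,k) T_{|α|+k}(X)`. -/
def Vfun (d : ℕ) (α : Fin d → ℕ) (X : ℝ) : ℝ :=
  4 * Real.exp (-X / 2) *
    ∑ k ∈ Finset.range d, ((d - 1).choose k : ℝ) * Tfun ((∑ j, α j) + k) X

/-- `S_n(X) = Σ_{k=0}^{n} (−1)^k L_k(X)`. -/
def Sfun (n : ℕ) (X : ℝ) : ℝ :=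
  ∑ k ∈ Finset.range (n + 1), (-1 : ℝ) ^ k * laguerreFun k X

/-- The derivative of `laguerreFun n`. -/
def lagD (n : ℕ) (x : ℝ) : ℝ :=
  -∑ k ∈ Finset.range n, ((n.choose (k+1) : ℝ)) * (-x) ^ k / (k.factorial : ℝ)

lemma hasDerivAt_laguerre (n : ℕ) (x : ℝ) :
    HasDerivAt (laguerreFun n) (lagD n x) x := by
  have h : HasDerivAt (laguerreFun n)
      (∑ k ∈ Finset.range (n+1),
        (n.choose k : ℝ) * ((k : ℝ) * (-x) ^ (k-1) * (-1)) / (k.factorial : ℝ)) x := by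
    apply HasDerivAt.fun_sum
    intro k _
    exact (((hasDerivAt_neg x).pow k).const_mul ((n.choose k : ℝ))).div_const _
  convert h using 1
  rw [Finset.sum_range_succ']
  simp only [Nat.cast_zero, zero_mul, mul_zero, zero_div, add_zero]
  rw [lagD, ← Finset.sum_neg_distrib]
  apply Finset.sum_congr rfl
  intro k _
  have hk : ((k+1).factorial : ℝ) = (k+1) * (k.factorial : ℝ) := by
    push_cast [Nat.factorial_succ]; ring
  have hkf : (k.factorial : ℝ) ≠ 0 := Nat.cast_ne_zero.mpr k.factorial_ne_zero
  rw [hk]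
  push_cast
  field_simp

lemma lagD_succ (n : ℕ) (x : ℝ) :
    lagD (n+1) x = lagD n x - laguerreFun n x := by
  rw [lagD, lagD, laguerreFun]
  have h1 : ∑ k ∈ Finset.range n, ((n.choose (k+1) : ℝ)) * (-x) ^ k / (k.factorial : ℝ)
      = ∑ k ∈ Finset.range (n+1), ((n.choose (k+1) : ℝ)) * (-x) ^ k / (k.factorial : ℝ) := by
    rw [Finset.sum_range_succ, Nat.choose_succ_self]
    simp
  rw [h1]
  have h2 : ∀ k ∈ Finset.range (n+1),
      ((n+1).choose (k+1) : ℝ) * (-x) ^ k / (k.factorial : ℝ)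
      = (n.choose (k+1) : ℝ) * (-x) ^ k / (k.factorial : ℝ)
        + (n.choose k : ℝ) * (-x) ^ k / (k.factorial : ℝ) := by
    intro k _
    rw [Nat.choose_succ_succ, Nat.cast_add]
    ring
  rw [Finset.sum_congr rfl h2, Finset.sum_add_distrib]
  ring

/-- The derivative of `Tfun n`. -/
def TD (n : ℕ) (x : ℝ) : ℝ :=
  (∑ k ∈ Finset.range n, (-1 : ℝ) ^ k * lagD k x) + (-1 : ℝ) ^ n / 2 * lagD n x

lemma hasDerivAt_T (n : ℕ) (x : ℝ) : HasDerivAt (Tfun n) (TD n x) x := by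
  exact (HasDerivAt.fun_sum (fun k _ => (hasDerivAt_laguerre k x).const_mul ((-1:ℝ)^k))).add
    ((hasDerivAt_laguerre n x).const_mul ((-1:ℝ)^n / 2))

lemma TD_eq (n : ℕ) (x : ℝ) :
    TD n x = 1/2 * ∑ k ∈ Finset.range n, (-1 : ℝ) ^ k * laguerreFun k x := by
  induction n with
  | zero => simp [TD, lagD]
  | succ m ih =>
    rw [TD, Finset.sum_range_succ, lagD_succ]
    rw [TD] at ih
    rw [Finset.sum_range_succ, mul_add, ← ih]
    push_cast [pow_succ]
    ring

theorem deriv_T (n : ℕ) (hn : 1 ≤ n) (X : ℝ) :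
    deriv (Tfun n) X = (1 / 2) * Sfun (n - 1) X := by
  rw [(hasDerivAt_T n X).deriv, TD_eq, Sfun, Nat.sub_add_cancel hn]

end
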